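/- For a bivector P (an alternating bilinear form on V*) and a subspace Σ ⊆ V*, the graph E_{(P,Σ)} = {(i(σ)P, σ) : σ ∈ Σ} is g-isotropic in V ⊕ V*, and its g-orthogonal is E′_{(P,Σ)} = {(i(β)P + Y, β) : β ∈ V*, Y ∈ ann Σ}, where ann Σ = {Y ∈ V : β(Y) = 0 for all β ∈ Σ}. -/
import Mathlib


/-- The neutral metric `g((X,α),(Y,β)) = (1/2)(α(Y) + β(X))` on `V ⊕ V*`. -/
noncomputable def bigG (V : Type*) [AddCommGroup V] [Module ℝ V]
    (P Q : V × Module.Dual ℝ V) : ℝ :=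
  (1 / 2) * (P.2 Q.1 + Q.2 P.1)

/-- For a bivector `P` (alternating bilinear form on `V*`) with associated map
`♯_P` (characterized by `β(♯_P σ) = P(σ,β)`) and a subspace `Σ ⊆ V*`, the
graph `E_{(P,Σ)} = {(♯_P σ, σ) : σ ∈ Σ}` is `g`-isotropic and its
`g`-orthogonal is `E′_{(P,Σ)} = {(♯_P β + Y, β) : β ∈ V*, Y ∈ ann Σ}`. -/
theorem graph_sharp_isotropic_orthogonal (V : Type*) [AddCommGroup V]
    [Module ℝ V]
    (P : Module.Dual ℝ V →ₗ[ℝ] Module.Dual ℝ V →ₗ[ℝ] ℝ)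
    (halt : ∀ σ τ : Module.Dual ℝ V, P σ τ = - P τ σ)
    (sharp : Module.Dual ℝ V →ₗ[ℝ] V)
    (hsharp : ∀ σ β : Module.Dual ℝ V, β (sharp σ) = P σ β)
    (Sg : Submodule ℝ (Module.Dual ℝ V)) :
    (∀ σ ∈ Sg, ∀ τ ∈ Sg, bigG V (sharp σ, σ) (sharp τ, τ) = 0) ∧
    {Q : V × Module.Dual ℝ V | ∀ σ ∈ Sg, bigG V (sharp σ, σ) Q = 0}
      = {Q : V × Module.Dual ℝ V |
          ∃ Y : V, (∀ σ ∈ Sg, σ Y = 0) ∧ Q.1 = sharp Q.2 + Y} := by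
  constructor
  · intro σ _ τ _
    simp only [bigG, hsharp, halt σ τ]
    ring
  · ext Q
    simp only [Set.mem_setOf_eq, bigG]
    constructor
    · intro h
      refine ⟨Q.1 - sharp Q.2, fun σ hσ => ?_, by abel⟩
      have := h σ hσ
      have h2 : σ Q.1 + Q.2 (sharp σ) = 0 := by linarith
      rw [map_sub, hsharp]
      have := halt Q.2 σ
      have h3 := hsharp σ Q.2
      linarith
    · rintro ⟨Y, hY, hQ⟩ σ hσ
      rw [hQ, map_add, hY σ hσ, hsharp, hsharp, halt σ Q.2]
      ring
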